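/- Suppose M ∈ A* ⊗ B* ⊗ C equals φ₁ + φ₂ where φ₂ = α ⊗ β ⊗ c is a simple tensor, and there are subspaces A₀ ⊂ A*, C₀ ⊂ C with φ₁ ∈ A₀ ⊗ B* ⊗ C and image of φ₁ contained in C₀. If M is the 2×2 matrix multiplication tensor (under identifications A* = B* = C* = M₂(ℂ)*) and dim C₀ = 2, with α vanishing on a nonzero element a and β vanishing on a nonzero element b such that a annihilates φ₂ on the left and b on the right, then M(a, ·) and M(·, b) have images equal to the same 2-dimensional subspace of M₂(ℂ), which contradicts the fact that in M₂(ℂ) no 2-dimensional subspace is simultaneously a nonzero proper left ideal and right ideal. -/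

import Mathlib

open Matrix

/-- If 2×2 matrix multiplication were φ₁ + φ₂ with φ₂ = α ⊗ β ⊗ c simple, the
image of φ₁ contained in a 2-dimensional subspace C₀, and α, β vanishing on
nonzero elements a, b respectively, then a·M₂(ℂ) and M₂(ℂ)·b would both equal
C₀, contradicting that no 2-dimensional subspace of M₂(ℂ) is simultaneously a
nonzero proper left ideal and right ideal.  Hence no such configuration exists. -/
theorem stmt17 (φ₁ : Matrix (Fin 2) (Fin 2) ℂ → Matrix (Fin 2) (Fin 2) ℂ →
      Matrix (Fin 2) (Fin 2) ℂ)
    (α β : Matrix (Fin 2) (Fin 2) ℂ →ₗ[ℂ] ℂ) (c : Matrix (Fin 2) (Fin 2) ℂ)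
    (C₀ : Submodule ℂ (Matrix (Fin 2) (Fin 2) ℂ))
    (hC₀ : Module.finrank ℂ C₀ = 2)
    (hφ₁ : ∀ x y, φ₁ x y ∈ C₀)
    (hM : ∀ x y, x * y = φ₁ x y + (α x * β y) • c)
    (a b : Matrix (Fin 2) (Fin 2) ℂ) (ha : a ≠ 0) (hb : b ≠ 0)
    (hα : α a = 0) (hβ : β b = 0) :
    False := by
  have hA : ∀ y, a * y ∈ C₀ := fun y => by
    have h := hM a y
    rw [hα, zero_mul, zero_smul, add_zero] at h
    rw [h]; exact hφ₁ a y
  have hB : ∀ x, x * b ∈ C₀ := fun x => by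
    have h := hM x b
    rw [hβ, mul_zero, zero_smul, add_zero] at h
    rw [h]; exact hφ₁ x b
  obtain ⟨i, j, haij⟩ : ∃ i j, a i j ≠ 0 := by
    by_contra h; push_neg at h; exact ha (by ext i j; simp [h])
  obtain ⟨i', j', hbij⟩ : ∃ i j, b i j ≠ 0 := by
    by_contra h; push_neg at h; exact hb (by ext i j; simp [h])
  obtain ⟨k, hik⟩ : ∃ k : Fin 2, i ≠ k := by
    fin_cases i
    · exact ⟨1, by decide⟩
    · exact ⟨0, by decide⟩
  have hA₁e : ∀ (m n : Fin 2), (a * Matrix.single j 0 (1:ℂ) : Matrix (Fin 2) (Fin 2) ℂ) m n = if n = 0 then a m j else 0 := by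
    intro m n
    by_cases h : n = 0
    · subst h; simp
    · simp [h]
  have hA₂e : ∀ (m n : Fin 2), (a * Matrix.single j 1 (1:ℂ) : Matrix (Fin 2) (Fin 2) ℂ) m n = if n = 1 then a m j else 0 := by
    intro m n
    by_cases h : n = 1
    · subst h; simp
    · simp [h]
  have hBe : ∀ (m n : Fin 2), (Matrix.single k i' (1:ℂ) * b : Matrix (Fin 2) (Fin 2) ℂ) m n = if m = k then b i' n else 0 := by
    intro m n
    by_cases h : m = k
    · subst h; simp
    · simp [h]
  set A₁ : Matrix (Fin 2) (Fin 2) ℂ := a * Matrix.single j 0 1 with hA₁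
  set A₂ : Matrix (Fin 2) (Fin 2) ℂ := a * Matrix.single j 1 1 with hA₂
  set B : Matrix (Fin 2) (Fin 2) ℂ := Matrix.single k i' 1 * b with hBdef
  have hli : LinearIndependent ℂ ![A₁, A₂, B] := by
    rw [Fintype.linearIndependent_iff]
    intro g hg
    have hg' : ∀ m n, g 0 * A₁ m n + g 1 * A₂ m n + g 2 * B m n = 0 := by
      intro m n
      have h := congrFun (congrFun hg m) n
      simp only [Fin.sum_univ_three, Matrix.cons_val_zero, Matrix.cons_val_one,
        Matrix.head_cons, Matrix.cons_val_two, Matrix.tail_cons, Matrix.add_apply,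
        Matrix.smul_apply, smul_eq_mul, Matrix.zero_apply] at h
      linear_combination h
    have e1 := hg' i 0
    rw [hA₁e, hA₂e, hBe, if_pos rfl, if_neg (by decide : ¬ ((0 : Fin 2) = 1)),
      if_neg hik] at e1
    have hg0 : g 0 = 0 := by simpa [haij] using e1
    have e2 := hg' i 1
    rw [hA₁e, hA₂e, hBe, if_neg (by decide : ¬ ((1 : Fin 2) = 0)), if_pos rfl,
      if_neg hik] at e2
    have hg1 : g 1 = 0 := by simpa [haij] using e2
    have e3 := hg' k j'
    rw [hBe, if_pos rfl, hg0, hg1] at e3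
    have hg2 : g 2 = 0 := by simpa [hbij] using e3
    intro m
    fin_cases m
    · exact hg0
    · exact hg1
    · exact hg2
  have hsub : Submodule.span ℂ (Set.range ![A₁, A₂, B]) ≤ C₀ := by
    rw [Submodule.span_le]
    rintro x ⟨m, rfl⟩
    fin_cases m
    · exact hA _
    · exact hA _
    · exact hB _
  have h3 : Module.finrank ℂ (Submodule.span ℂ (Set.range ![A₁, A₂, B])) = 3 := by
    rw [finrank_span_eq_card hli]; simp
  have hle := Submodule.finrank_mono hsub
  rw [h3, hC₀] at hle
  omega
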